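/- Define a function E_G on finite lists of real numbers in (0,1) recursively by: E_G([]) = 0; E_G([q]) = 1; and for a list with first two entries q_1, q_2 followed by a (possibly empty) list R, writing a = max(q_1,q_2) and b = min(q_1,q_2), E_G(q_1 :: q_2 :: R) = q_1·q_2·(1 + E_G(R)) + a·(1 − b)·(2 + E_G(R)) + (1 − a)·(2 + E_G(b :: R)). Then E_G([0.68, 0.62, 0.65, 0.62]) < E_G([0.68, 0.65, 0.62, 0.62]). That is, for four units with good-probabilities {0.62, 0.62, 0.65, 0.68}, the generalized pairwise testing algorithm applied in the order 0.68, 0.62, 0.65, 0.62 has strictly smaller expected number of tests than the same algorithm applied in the decreasing order 0.68, 0.65, 0.62, 0.62; hence the ordered (sorted) testing order is not optimal for the generalized pairwise testing algorithm. -/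
import Mathlib


/-- Expected number of tests of the generalized pairwise testing algorithm (GPTA)
applied to a list of good-probabilities in the given order. -/
noncomputable def EG : List ℝ → ℝ
  | [] => 0
  | [_] => 1
  | q₁ :: q₂ :: R =>
      q₁ * q₂ * (1 + EG R) + max q₁ q₂ * (1 - min q₁ q₂) * (2 + EG R)
        + (1 - max q₁ q₂) * (2 + EG (min q₁ q₂ :: R))
termination_by L => L.length

/-- The sorted (decreasing) testing order is not optimal for GPTA: for good-probabilities
`{0.62, 0.62, 0.65, 0.68}`, the order `0.68, 0.62, 0.65, 0.62` is strictly better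
than the decreasing order `0.68, 0.65, 0.62, 0.62`. -/
theorem stmt_6 :
    EG [0.68, 0.62, 0.65, 0.62] < EG [0.68, 0.65, 0.62, 0.62] := by
  norm_num [EG, max_def, min_def]
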